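/- Under assumptions (B1)–(B6), the family {l_t} satisfies: (1) Σ_{t=0}^∞ (L^t p^{l_0})(K,z) < ∞ for all compact K ⊆ X and z ∈ Z, where p^{l_0}(K,z) = p_{K,z}(l_0) and L is the Bellman COP (Lp)(K,z) = β ∫_Z max_{x∈K} p(Γ(x,z'),z') Q_z(dz'); (2) the function R₀[Γ](x,z) := R₀(Γ(x,z), z) belongs to ℒ¹(Z; C(X)) and p^{l_0} + L R₀ ≤ R₀ pointwise, where R₀(K,z) = Σ_{t=0}^∞ p_{K,z}(l_t). -/

import Mathlib

open MeasureTheory Filter Topology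

noncomputable section

abbrev Euc (n : ℕ) : Type := EuclideanSpace ℝ (Fin n)

def Cara {X : Type*} [TopologicalSpace X] {Z : Type*} [MeasurableSpace Z]
    (f : X → Z → ℝ) : Prop :=
  (∀ x, Measurable (f x)) ∧ (∀ z, Continuous fun x => f x z)

/-- Upper hemicontinuity of a correspondence. -/
def UHC {α β : Type*} [TopologicalSpace α] [TopologicalSpace β] (G : α → Set β) : Prop :=
  ∀ a, ∀ V : Set β, IsOpen V → G a ⊆ V → ∀ᶠ a' in nhds a, G a' ⊆ V

/-- Lower hemicontinuity of a correspondence. -/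
def LHC {α β : Type*} [TopologicalSpace α] [TopologicalSpace β] (G : α → Set β) : Prop :=
  ∀ a, ∀ V : Set β, IsOpen V → (G a ∩ V).Nonempty → ∀ᶠ a' in nhds a, (G a' ∩ V).Nonempty

def MemL1C {l k : ℕ} (X : Set (Euc l)) (Z : Set (Euc k)) (Q : Z → Measure Z)
    (f : X → Z → ℝ) : Prop :=
  Cara f ∧ ∀ K : Set X, IsCompact K → ∀ z : Z,
    Integrable (fun z' => ⨆ x : K, |f x z'|) (Q z)

def pKz {l k : ℕ} {X : Set (Euc l)} {Z : Set (Euc k)} (Q : Z → Measure Z)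
    (K : Set X) (z : Z) (f : X → Z → ℝ) : ℝ :=
  ∫ z', (⨆ x : K, |f x z'|) ∂(Q z)


section Helpers

variable {α β γ : Type*}

lemma ciSup_set_eq (f : β → ℝ) (K : Set β) : (⨆ y : K, f y) = sSup (f '' K) := by
  rw [Set.image_eq_range]; rfl

lemma bddAbove_range_subtype {f : β → ℝ} {K : Set β} (h : BddAbove (f '' K)) :
    BddAbove (Set.range fun y : K => f y) := by
  rw [← Set.image_eq_range]; exact h

lemma ciSup_set_mono {f : β → ℝ} {K₁ K₂ : Set β} (h : K₁ ⊆ K₂) (h0 : ∀ y, 0 ≤ f y)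
    (hb : BddAbove (f '' K₂)) : (⨆ y : K₁, f y) ≤ ⨆ y : K₂, f y := by
  rw [ciSup_set_eq, ciSup_set_eq]
  rcases K₁.eq_empty_or_nonempty with rfl | hne
  · simp only [Set.image_empty, Real.sSup_empty]
    exact Real.sSup_nonneg (by rintro x ⟨y, -, rfl⟩; exact h0 y)
  · exact csSup_le_csSup hb (hne.image f) (Set.image_mono h)

lemma uhc_fix {δ : Type*} [TopologicalSpace α] [TopologicalSpace β] [TopologicalSpace δ]
    {G : α → Set β} (hu : UHC G) {g : δ → α} (hg : Continuous g) : UHC (fun d => G (g d)) := by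
  intro d V hV hsub
  exact (hg.tendsto d).eventually (hu (g d) V hV hsub)

lemma lhc_fix {δ : Type*} [TopologicalSpace α] [TopologicalSpace β] [TopologicalSpace δ]
    {G : α → Set β} (hl : LHC G) {g : δ → α} (hg : Continuous g) : LHC (fun d => G (g d)) := by
  intro d V hV hne
  exact (hg.tendsto d).eventually (hl (g d) V hV hne)

lemma isCompact_biUnion_UHC [TopologicalSpace α] [TopologicalSpace β]
    {G : α → Set β} (hu : UHC G) (hc : ∀ a, IsCompact (G a))
    {S : Set α} (hS : IsCompact S) : IsCompact (⋃ a ∈ S, G a) := by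
  classical
  apply isCompact_of_finite_subcover
  intro ι U hUo hcov
  have h1 : ∀ a, ∃ t : Finset ι, G a ⊆ ⋃ i ∈ t, U i ∨ ¬ a ∈ S := by
    intro a
    by_cases ha : a ∈ S
    · obtain ⟨t, ht⟩ := (hc a).elim_finite_subcover U hUo
        ((Set.subset_biUnion_of_mem (u := G) ha).trans hcov)
      exact ⟨t, Or.inl ht⟩
    · exact ⟨∅, Or.inr ha⟩
  choose t ht using h1
  have hW : ∀ a ∈ S, {a' | G a' ⊆ ⋃ i ∈ t a, U i} ∈ nhds a := by
    intro a ha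
    refine hu a _ (isOpen_biUnion fun i _ => hUo i) ?_
    rcases ht a with h | h
    · exact h
    · exact absurd ha h
  obtain ⟨s, hsS, hcover⟩ := hS.elim_nhds_subcover _ hW
  refine ⟨s.biUnion t, ?_⟩
  rintro y hy
  simp only [Set.mem_iUnion] at hy ⊢
  obtain ⟨a, ha, hya⟩ := hy
  obtain ⟨x, hxs, hax⟩ := Set.mem_iUnion₂.1 (hcover ha)
  have := hax hya
  rw [Set.mem_iUnion₂] at this
  obtain ⟨i, hi, hyi⟩ := this
  exact ⟨i, Finset.mem_biUnion.2 ⟨x, hxs, hi⟩, hyi⟩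

lemma berge_sup_continuous [TopologicalSpace α] [TopologicalSpace β]
    {G : α → Set β} (hu : UHC G) (hl : LHC G) (hne : ∀ a, (G a).Nonempty)
    (hc : ∀ a, IsCompact (G a)) {f : β → ℝ} (hf : Continuous f) :
    Continuous fun a => ⨆ y : G a, f y := by
  have hbdd : ∀ a, BddAbove (f '' G a) := fun a => ((hc a).image hf).bddAbove
  have hval : ∀ a, ∃ y ∈ G a, (⨆ w : G a, f w) = f y := by
    intro a
    obtain ⟨y, hyG, hy⟩ := (hc a).exists_isMaxOn (hne a) hf.continuousOn
    rw [isMaxOn_iff] at hy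
    refine ⟨y, hyG, ?_⟩
    rw [ciSup_set_eq]
    exact le_antisymm (csSup_le ((hne a).image f) (by rintro r ⟨w, hw, rfl⟩; exact hy w hw))
      (le_csSup (hbdd a) ⟨y, hyG, rfl⟩)
  rw [continuous_iff_continuousAt]
  intro a₀
  unfold ContinuousAt
  apply tendsto_order.2
  constructor
  · intro l hl₀
    obtain ⟨y₀, hy₀G, hval₀⟩ := hval a₀
    have hl₀' : l < ⨆ w : G a₀, f w := hl₀
    rw [hval₀] at hl₀'
    have hne' : (G a₀ ∩ f ⁻¹' Set.Ioi l).Nonempty := ⟨y₀, hy₀G, hl₀'⟩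
    filter_upwards [hl a₀ _ (isOpen_Ioi.preimage hf) hne'] with a ha
    obtain ⟨y, hyG, hy⟩ := ha
    calc l < f y := hy
    _ ≤ ⨆ w : G a, f w := by
        rw [ciSup_set_eq]; exact le_csSup (hbdd a) ⟨y, hyG, rfl⟩
  · intro u hu₀
    have hsub : G a₀ ⊆ f ⁻¹' Set.Iio u := by
      intro y hy
      have : f y ≤ ⨆ w : G a₀, f w := by
        rw [ciSup_set_eq]; exact le_csSup (hbdd a₀) ⟨y, hy, rfl⟩
      exact lt_of_le_of_lt this hu₀
    filter_upwards [hu a₀ _ (isOpen_Iio.preimage hf) hsub] with a ha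
    obtain ⟨y, hyG, hvala⟩ := hval a
    rw [hvala]
    exact ha hyG

lemma measurable_ciSup_compact [TopologicalSpace β] [SecondCountableTopology β]
    [MeasurableSpace γ] {f : β → γ → ℝ} {K : Set β} (hK : IsCompact K)
    (hcont : ∀ z, Continuous fun y => f y z) (hmeas : ∀ y, Measurable (f y)) :
    Measurable fun z => ⨆ y : K, f y z := by
  rcases K.eq_empty_or_nonempty with rfl | hKne
  · have : (fun z => ⨆ y : (∅ : Set β), f y z) = fun _ => 0 := by
      funext z
      exact Real.iSup_of_isEmpty _
    rw [this]; exact measurable_const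
  · obtain ⟨D', hD'c, hD'd⟩ := TopologicalSpace.exists_countable_dense ↥K
    set D : Set β := Subtype.val '' D' with hD
    have hDK : D ⊆ K := by rintro _ ⟨y, -, rfl⟩; exact y.2
    have hDcnt : D.Countable := hD'c.image _
    have hclos : ∀ y ∈ K, y ∈ closure D := by
      intro y hy
      have h1 : (⟨y, hy⟩ : ↥K) ∈ closure D' := hD'd.closure_eq ▸ Set.mem_univ _
      exact image_closure_subset_closure_image continuous_subtype_val
        (Set.mem_image_of_mem _ h1)
    have hDne : D.Nonempty := by
      obtain ⟨y, hy⟩ := hKne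
      by_contra h
      rw [Set.not_nonempty_iff_eq_empty] at h
      have := hclos y hy
      rw [h, closure_empty] at this
      exact this
    have key : ∀ z, (⨆ y : K, f y z) = ⨆ y : D, f y z := by
      intro z
      rw [ciSup_set_eq (fun y => f y z) K, ciSup_set_eq (fun y => f y z) D]
      have hbK : BddAbove ((fun y => f y z) '' K) := (hK.image (hcont z)).bddAbove
      have hbD : BddAbove ((fun y => f y z) '' D) := hbK.mono (Set.image_mono hDK)
      apply le_antisymm
      · apply csSup_le (hKne.image _)
        rintro r ⟨y, hy, rfl⟩
        have h1 : f y z ∈ closure ((fun y => f y z) '' D) :=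
          map_mem_closure (f := fun y => f y z) (hcont z) (hclos y hy)
            (fun w hw => Set.mem_image_of_mem _ hw)
        have h2 : closure ((fun y => f y z) '' D) ⊆ Set.Iic (sSup ((fun y => f y z) '' D)) :=
          closure_minimal (fun r hr => le_csSup hbD hr) isClosed_Iic
        exact h2 h1
      · exact csSup_le_csSup hbK (hDne.image _) (Set.image_mono hDK)
    simp_rw [key]
    have : Countable ↥D := hDcnt.to_subtype
    exact Measurable.iSup (fun (y : D) => hmeas y)

lemma measurable_tsum_nonneg [MeasurableSpace γ] {h : ℕ → γ → ℝ}
    (hm : ∀ t, Measurable (h t)) (h0 : ∀ t z, 0 ≤ h t z) :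
    Measurable fun z => ∑' t, h t z := by
  have e : (fun z => ∑' t, h t z) = fun z => ((∑' t, (h t z).toNNReal : NNReal) : ℝ) := by
    funext z
    rw [NNReal.coe_tsum]
    exact tsum_congr fun t => (Real.coe_toNNReal _ (h0 t z)).symm
  rw [e]
  exact (Measurable.nnreal_tsum fun t => (hm t).real_toNNReal).coe_nnreal_real

lemma integrable_tsum_nonneg [MeasurableSpace γ] {μ : Measure γ} {h : ℕ → γ → ℝ}
    (hm : ∀ t, Measurable (h t)) (hi : ∀ t, Integrable (h t) μ) (h0 : ∀ t z, 0 ≤ h t z)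
    (hs : Summable fun t => ∫ z, h t z ∂μ) :
    Integrable (fun z => ∑' t, h t z) μ ∧ ((∫ z, ∑' t, h t z ∂μ) = ∑' t, ∫ z, h t z ∂μ)
      ∧ ∀ᵐ z ∂μ, Summable fun t => h t z := by
  have hint0 : ∀ t, 0 ≤ ∫ z, h t z ∂μ := fun t => integral_nonneg (h0 t)
  have hofreal' : ∀ t, (∫⁻ z, ENNReal.ofReal (h t z) ∂μ) = ENNReal.ofReal (∫ z, h t z ∂μ) :=
    fun t => (ofReal_integral_eq_lintegral_ofReal (hi t) (Eventually.of_forall (h0 t))).symm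
  have hofreal : ∀ t, (∫⁻ z, ‖h t z‖₊ ∂μ) = ENNReal.ofReal (∫ z, h t z ∂μ) := by
    intro t
    rw [← hofreal' t]
    exact lintegral_congr fun z => Real.enorm_eq_ofReal (h0 t z)
  have hlsum : (∑' t, ∫⁻ z, ‖h t z‖₊ ∂μ) ≠ ⊤ := by
    simp_rw [hofreal]
    rw [← ENNReal.ofReal_tsum_of_nonneg hint0 hs]
    exact ENNReal.ofReal_ne_top
  have hmeas2 : ∀ t, AEMeasurable (fun z => ENNReal.ofReal (h t z)) μ :=
    fun t => (hm t).ennreal_ofReal.aemeasurable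
  have hlt : (∫⁻ z, ∑' t, ENNReal.ofReal (h t z) ∂μ) < ⊤ := by
    rw [lintegral_tsum hmeas2]
    simp_rw [hofreal']
    rw [← ENNReal.ofReal_tsum_of_nonneg hint0 hs]
    exact ENNReal.ofReal_lt_top
  have hae : ∀ᵐ z ∂μ, Summable fun t => h t z := by
    have := ae_lt_top' (AEMeasurable.ennreal_tsum hmeas2) hlt.ne
    filter_upwards [this] with z hz
    have hz' : (∑' t, ENNReal.ofReal (h t z)) ≠ ⊤ := hz.ne
    have hz'' : (∑' t, (((h t z).toNNReal : NNReal) : ENNReal)) ≠ ⊤ := hz'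
    rw [ENNReal.tsum_coe_ne_top_iff_summable_coe] at hz''
    exact hz''.congr fun t => Real.coe_toNNReal _ (h0 t z)
  refine ⟨?_, integral_tsum (fun t => (hm t).aestronglyMeasurable) hlsum, hae⟩
  refine ⟨(measurable_tsum_nonneg hm h0).aestronglyMeasurable, ?_⟩
  rw [hasFiniteIntegral_iff_norm]
  calc (∫⁻ z, ENNReal.ofReal ‖∑' t, h t z‖ ∂μ)
      ≤ ∫⁻ z, ∑' t, ENNReal.ofReal (h t z) ∂μ := by
        refine lintegral_mono fun z => ?_
        rw [Real.norm_eq_abs, abs_of_nonneg (tsum_nonneg (fun t => h0 t z))]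
        by_cases hsz : Summable fun t => h t z
        · rw [ENNReal.ofReal_tsum_of_nonneg (fun t => h0 t z) hsz]
        · rw [tsum_eq_zero_of_not_summable hsz]
          simp
    _ < ⊤ := hlt

lemma continuous_param_integral [TopologicalSpace α] [FirstCountableTopology α]
    [MeasurableSpace γ] {μ : Measure γ} {g : α → γ → ℝ}
    (hgc : ∀ z, Continuous fun a => g a z)
    (hgm : ∀ a, AEStronglyMeasurable (g a) μ)
    (hdom : ∀ S : Set α, IsCompact S → ∃ b : γ → ℝ, Integrable b μ ∧ ∀ a ∈ S, ∀ z, |g a z| ≤ b z) :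
    Continuous fun a => ∫ z, g a z ∂μ := by
  rw [continuous_iff_continuousAt]
  intro a₀
  unfold ContinuousAt
  rw [tendsto_iff_seq_tendsto]
  intro u hu
  obtain ⟨b, hbi, hb⟩ := hdom _ hu.isCompact_insert_range
  have := tendsto_integral_of_dominated_convergence (F := fun n => g (u n)) (f := g a₀) b
    (fun n => hgm (u n)) hbi
    (fun n => Eventually.of_forall fun z => by
      simpa [Real.norm_eq_abs] using hb (u n) (Set.mem_insert_of_mem _ ⟨n, rfl⟩) z)
    (Eventually.of_forall fun z => ((hgc z).tendsto a₀).comp hu)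
  exact this

lemma continuous_param_tsum [TopologicalSpace α] [FirstCountableTopology α]
    {g : ℕ → α → ℝ} (hgc : ∀ t, Continuous (g t))
    (hdom : ∀ S : Set α, IsCompact S → ∃ b : ℕ → ℝ, Summable b ∧ ∀ t, ∀ a ∈ S, |g t a| ≤ b t) :
    Continuous fun a => ∑' t, g t a := by
  rw [continuous_iff_continuousAt]
  intro a₀
  unfold ContinuousAt
  rw [tendsto_iff_seq_tendsto]
  intro u hu
  obtain ⟨b, hbs, hb⟩ := hdom _ hu.isCompact_insert_range
  have := tendsto_tsum_of_dominated_convergence (f := fun n t => g t (u n))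
    (g := fun t => g t a₀) (bound := b) hbs
    (fun t => ((hgc t).tendsto a₀).comp hu)
    (Eventually.of_forall fun n t => by
      simpa [Real.norm_eq_abs] using hb t (u n) (Set.mem_insert_of_mem _ ⟨n, rfl⟩))
  exact this

end Helpers

/-- Lemma (rt_family): under (B1)-(B6), with `p^{l₀}(K,z) = p_{K,z}(l₀)` and the Bellman
contraction-operator `(Lp)(K,z) = β ∫ max_{x∈K} p(Γ(x,z'),z') dQ_z`:
(1) `Σ_t (L^t p^{l₀})(K,z) < ∞` for all compact `K` and `z`;
(2) `R₀[Γ] ∈ ℒ¹(Z;C(X))` and `p^{l₀} + L R₀ ≤ R₀`, where `R₀(K,z) = Σ_t p_{K,z}(l_t)`. -/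
theorem stmt13 {l k : ℕ} (X : Set (Euc l)) (Z : Set (Euc k))
    (hX : MeasurableSet X) (hZ : MeasurableSet Z)
    (β : ℝ) (hβ0 : 0 < β) (hβ1 : β < 1)
    (Q : Z → Measure Z) (hQ : ∀ z, IsProbabilityMeasure (Q z))
    (hQmeas : ∀ B : Set Z, MeasurableSet B → Measurable fun z => (Q z B).toReal)
    (Γ : X × Z → Set X)
    (hΓne : ∀ p, (Γ p).Nonempty) (hΓcpt : ∀ p, IsCompact (Γ p))
    (hΓu : UHC Γ) (hΓl : LHC Γ)
    (U : X → X → Z → ℝ)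
    (hUmeas : ∀ x y, Measurable (U x y))
    (hUcont : ∀ z : Z, Continuous fun p : X × X => U p.1 p.2 z)
    -- (B6)
    (lfam : ℕ → X → Z → ℝ)
    (hl_nonneg : ∀ t x z, 0 ≤ lfam t x z)
    (hl_mem : ∀ t, MemL1C X Z Q (lfam t))
    (hl0 : ∀ x z, |⨆ y : Γ (x, z), U x y z| ≤ lfam 0 x z)
    (hl_rec : ∀ t x z,
      β * ∫ z', (⨆ y : Γ (x, z), lfam t y z') ∂(Q z) ≤ lfam (t+1) x z)
    (hl_sum : ∀ K : Set X, IsCompact K → ∀ z : Z,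
      Summable fun t => pKz Q K z (lfam t)) :
    -- the Bellman COP
    (∀ K : Set X, IsCompact K → ∀ z : Z,
      Summable fun t =>
        (fun p : Set X → Z → ℝ => fun K z =>
            β * ∫ z', (⨆ x : K, p (Γ ((x : X), z')) z') ∂(Q z))^[t]
          (fun K z => pKz Q K z (lfam 0)) K z) ∧
    MemL1C X Z Q (fun x z => ∑' t, pKz Q (Γ (x, z)) z (lfam t)) ∧
    (∀ K : Set X, IsCompact K → ∀ z : Z,
      pKz Q K z (lfam 0) +
        β * ∫ z', (⨆ x : K, ∑' t, pKz Q (Γ ((x : X), z')) z' (lfam t)) ∂(Q z) ≤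
      ∑' t, pKz Q K z (lfam t)) := by
  classical
  have hlcm : ∀ t, (∀ x : X, Measurable (lfam t x)) := fun t => (hl_mem t).1.1
  have hlcc : ∀ t, (∀ z : Z, Continuous fun x : X => lfam t x z) := fun t => (hl_mem t).1.2
  have hP0 : ∀ (f : X → Z → ℝ) (K : Set X) (z : Z), 0 ≤ pKz Q K z f := fun f K z =>
    integral_nonneg fun z' => Real.iSup_nonneg fun x => abs_nonneg _
  have habs : ∀ t (K : Set X) (z' : Z), (⨆ x : K, |lfam t (x : X) z'|) = ⨆ x : K, lfam t (x : X) z' :=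
    fun t K z' => iSup_congr fun x => abs_of_nonneg (hl_nonneg t x z')
  have hbddl : ∀ t (K : Set X), IsCompact K → ∀ z' : Z,
      BddAbove ((fun y : X => |lfam t y z'|) '' K) :=
    fun t K hK z' => (hK.image (continuous_abs.comp (hlcc t z'))).bddAbove
  have hrec' : ∀ t (x : X) (z : Z), β * pKz Q (Γ (x, z)) z (lfam t) ≤ lfam (t+1) x z := by
    intro t x z
    have e : pKz Q (Γ (x, z)) z (lfam t)
        = ∫ z', (⨆ y : Γ (x, z), lfam t (y : X) z') ∂(Q z) := by
      unfold pKz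
      simp only [habs]
    rw [e]
    exact hl_rec t x z
  have hsupK : ∀ t (K : Set X), IsCompact K → ∀ z' : Z,
      β * (⨆ x : K, pKz Q (Γ ((x : X), z')) z' (lfam t)) ≤ ⨆ x : K, |lfam (t+1) (x : X) z'| := by
    intro t K hK z'
    rcases K.eq_empty_or_nonempty with rfl | hne
    · haveI : IsEmpty ↥(∅ : Set X) := Set.isEmpty_coe_sort.mpr rfl
      rw [Real.iSup_of_isEmpty, Real.iSup_of_isEmpty, mul_zero]
    · haveI : Nonempty ↥K := hne.to_subtype
      rw [mul_comm, ← le_div_iff₀ hβ0]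
      refine ciSup_le fun x => ?_
      rw [le_div_iff₀ hβ0, mul_comm]
      refine le_trans (hrec' t x z') ?_
      refine le_trans (le_abs_self _) ?_
      exact le_ciSup (bddAbove_range_subtype (hbddl (t+1) K hK z')) x
  have hUnion : ∀ (z : Z) (S : Set X), IsCompact S → IsCompact (⋃ x ∈ S, Γ ((x : X), z)) :=
    fun z S hS => isCompact_biUnion_UHC
      (uhc_fix hΓu (continuous_id.prodMk continuous_const)) (fun x => hΓcpt _) hS
  have hpmono : ∀ t (K₁ K₂ : Set X), K₁ ⊆ K₂ → IsCompact K₂ → ∀ z : Z,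
      pKz Q K₁ z (lfam t) ≤ pKz Q K₂ z (lfam t) := by
    intro t K₁ K₂ hsub hK₂ z
    unfold pKz
    refine integral_mono_of_nonneg
      (Eventually.of_forall fun z' => Real.iSup_nonneg fun x => abs_nonneg _)
      ((hl_mem t).2 K₂ hK₂ z) (Eventually.of_forall fun z' => ?_)
    exact ciSup_set_mono hsub (fun y => abs_nonneg _) (hbddl t K₂ hK₂ z')
  -- kernel
  have hQm : Measurable Q := by
    apply Measure.measurable_of_measurable_coe
    intro B hB
    have e : (fun z => Q z B) = fun z => ENNReal.ofReal ((Q z B).toReal) := by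
      funext z
      haveI := hQ z
      rw [ENNReal.ofReal_toReal (measure_ne_top (Q z) B)]
    rw [e]
    exact ENNReal.measurable_ofReal.comp (hQmeas B hB)
  let κ : ProbabilityTheory.Kernel Z Z := ⟨Q, hQm⟩
  haveI : ProbabilityTheory.IsMarkovKernel κ := ⟨fun z => hQ z⟩
  -- fixed-variable hemicontinuity
  have hu2 : ∀ z : Z, UHC (fun x : X => Γ (x, z)) :=
    fun z => uhc_fix hΓu (continuous_id.prodMk continuous_const)
  have hl2 : ∀ z : Z, LHC (fun x : X => Γ (x, z)) :=
    fun z => lhc_fix hΓl (continuous_id.prodMk continuous_const)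
  have hu1 : ∀ x : X, UHC (fun z : Z => Γ (x, z)) :=
    fun x => uhc_fix hΓu (continuous_const.prodMk continuous_id)
  have hl1 : ∀ x : X, LHC (fun z : Z => Γ (x, z)) :=
    fun x => lhc_fix hΓl (continuous_const.prodMk continuous_id)
  -- Berge continuity of the inner sup
  have hgcont_x : ∀ t (z z' : Z), Continuous fun x : X => ⨆ y : Γ ((x : X), z), |lfam t (y : X) z'| :=
    fun t z z' => berge_sup_continuous (hu2 z) (hl2 z) (fun x => hΓne _) (fun x => hΓcpt _)
      (continuous_abs.comp (hlcc t z'))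
  have hgcont_z : ∀ t (x : X) (z' : Z), Continuous fun z : Z => ⨆ y : Γ (x, z), |lfam t (y : X) z'| :=
    fun t x z' => berge_sup_continuous (hu1 x) (hl1 x) (fun z => hΓne _) (fun z => hΓcpt _)
      (continuous_abs.comp (hlcc t z'))
  have hgmeas : ∀ t (x : X) (z : Z), Measurable fun z' : Z => ⨆ y : Γ (x, z), |lfam t (y : X) z'| :=
    fun t x z => measurable_ciSup_compact (f := fun (y : X) (z' : Z) => |lfam t y z'|)
      (hΓcpt (x, z)) (fun z' => continuous_abs.comp (hlcc t z')) (fun y => (hlcm t y).abs)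
  -- measurability in z of z ↦ pKz Q (Γ (x,z)) z (lfam t)
  have hqmeas : ∀ t (x : X), Measurable fun z : Z => pKz Q (Γ (x, z)) z (lfam t) := by
    intro t x
    have humeas : Measurable
        (Function.uncurry fun z z' : Z => ⨆ y : Γ (x, z), |lfam t (y : X) z'|) :=
      measurable_uncurry_of_continuous_of_measurable
        (fun z' => hgcont_z t x z') (fun z => hgmeas t x z)
    have h2 := (humeas.stronglyMeasurable).integral_kernel_prod_right' (κ := κ)
    exact h2.measurable
  -- continuity in x of x ↦ pKz Q (Γ (x,z)) z (lfam t)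
  have hqcont : ∀ t (z : Z), Continuous fun x : X => pKz Q (Γ ((x : X), z)) z (lfam t) := by
    intro t z
    have h2 : Continuous fun x : X => ∫ z', (⨆ y : Γ ((x : X), z), |lfam t (y : X) z'|) ∂(Q z) := by
      apply continuous_param_integral
        (g := fun (x : X) (z' : Z) => ⨆ y : Γ ((x : X), z), |lfam t (y : X) z'|)
      · exact fun z' => hgcont_x t z z'
      · exact fun x => (hgmeas t x z).aestronglyMeasurable
      · intro S hS
        refine ⟨fun z' => ⨆ y : (⋃ w ∈ S, Γ ((w : X), z)), |lfam t (y : X) z'|,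
          (hl_mem t).2 _ (hUnion z S hS) z, ?_⟩
        intro x hx z'
        rw [abs_of_nonneg (Real.iSup_nonneg fun y => abs_nonneg _)]
        exact ciSup_set_mono (Set.subset_biUnion_of_mem (u := fun w : X => Γ ((w : X), z)) hx)
          (fun y => abs_nonneg _) (hbddl t _ (hUnion z S hS) z')
    exact h2
  -- the function F
  have hFmeas : ∀ x : X, Measurable fun z : Z => ∑' t, pKz Q (Γ (x, z)) z (lfam t) :=
    fun x => measurable_tsum_nonneg (fun t => hqmeas t x) (fun t z => hP0 _ _ _)
  have hFcont : ∀ z : Z, Continuous fun x : X => ∑' t, pKz Q (Γ ((x : X), z)) z (lfam t) := by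
    intro z
    apply continuous_param_tsum (g := fun t (x : X) => pKz Q (Γ ((x : X), z)) z (lfam t))
      (fun t => hqcont t z)
    intro S hS
    refine ⟨fun t => pKz Q (⋃ w ∈ S, Γ ((w : X), z)) z (lfam t), hl_sum _ (hUnion z S hS) z, ?_⟩
    intro t x hx
    rw [abs_of_nonneg (hP0 _ _ _)]
    exact hpmono t _ _ (Set.subset_biUnion_of_mem (u := fun w : X => Γ ((w : X), z)) hx)
      (hUnion z S hS) z
  -- summable tail bounds
  have hbKmeas : ∀ (K : Set X), IsCompact K → ∀ t,
      Measurable fun z' : Z => ⨆ x : K, |lfam (t+1) (x : X) z'| :=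
    fun K hK t => measurable_ciSup_compact (f := fun (x : X) (z' : Z) => |lfam (t+1) x z'|)
      hK (fun z' => continuous_abs.comp (hlcc (t+1) z')) (fun x => (hlcm (t+1) x).abs)
  have hsumb : ∀ (K : Set X), IsCompact K → ∀ z : Z,
      Integrable (fun z' => ∑' t, ⨆ x : K, |lfam (t+1) (x : X) z'|) (Q z)
      ∧ ((∫ z', ∑' t, ⨆ x : K, |lfam (t+1) (x : X) z'| ∂(Q z)) = ∑' t, pKz Q K z (lfam (t+1)))
      ∧ ∀ᵐ z' ∂(Q z), Summable fun t => ⨆ x : K, |lfam (t+1) (x : X) z'| := by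
    intro K hK z
    have h := integrable_tsum_nonneg (μ := Q z)
      (h := fun t z' => ⨆ x : K, |lfam (t+1) (x : X) z'|)
      (fun t => hbKmeas K hK t) (fun t => (hl_mem (t+1)).2 K hK z)
      (fun t z' => Real.iSup_nonneg fun x => abs_nonneg _)
      ((summable_nat_add_iff 1).2 (hl_sum K hK z))
    exact h
  -- a.e. pointwise bound on the sup of F
  have hsupF : ∀ (K : Set X), IsCompact K → ∀ (z' : Z),
      (Summable fun t => ⨆ x : K, |lfam (t+1) (x : X) z'|) →
      (⨆ x : K, ∑' t, pKz Q (Γ ((x : X), z')) z' (lfam t))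
        ≤ β⁻¹ * ∑' t, ⨆ x : K, |lfam (t+1) (x : X) z'| := by
    intro K hK z' hsz
    rcases K.eq_empty_or_nonempty with rfl | hne
    · haveI : IsEmpty ↥(∅ : Set X) := Set.isEmpty_coe_sort.mpr rfl
      rw [Real.iSup_of_isEmpty]
      exact mul_nonneg (inv_nonneg.2 hβ0.le)
        (tsum_nonneg fun t => Real.iSup_nonneg fun x => abs_nonneg _)
    · haveI : Nonempty ↥K := hne.to_subtype
      refine ciSup_le fun x => ?_
      rw [← tsum_mul_left]
      refine Summable.tsum_le_tsum (fun t => ?_) (hl_sum (Γ ((x : X), z')) (hΓcpt _) z') (hsz.mul_left _)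
      have h1 : β * pKz Q (Γ ((x : X), z')) z' (lfam t) ≤ ⨆ x : K, |lfam (t+1) (x : X) z'| := by
        refine le_trans (hrec' t x z') ?_
        refine le_trans (le_abs_self _) ?_
        exact le_ciSup (bddAbove_range_subtype (hbddl (t+1) K hK z')) x
      calc pKz Q (Γ ((x : X), z')) z' (lfam t)
          = β⁻¹ * (β * pKz Q (Γ ((x : X), z')) z' (lfam t)) := by
            rw [← mul_assoc, inv_mul_cancel₀ hβ0.ne', one_mul]
      _ ≤ β⁻¹ * (⨆ x : K, |lfam (t+1) (x : X) z'|) :=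
            mul_le_mul_of_nonneg_left h1 (inv_nonneg.2 hβ0.le)
  refine ⟨?_, ⟨⟨hFmeas, hFcont⟩, ?_⟩, ?_⟩
  · -- (1) summability of the iterates
    intro K hK z
    set Lop := (fun p : Set X → Z → ℝ => fun (K : Set X) (z : Z) =>
        β * ∫ z', (⨆ x : K, p (Γ ((x : X), z')) z') ∂(Q z)) with hLop
    set p0 : Set X → Z → ℝ := fun K z => pKz Q K z (lfam 0) with hp0
    have hclaim : ∀ t (K : Set X), IsCompact K → ∀ z : Z,
        0 ≤ Lop^[t] p0 K z ∧ Lop^[t] p0 K z ≤ pKz Q K z (lfam t) := by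
      intro t
      induction t with
      | zero => intro K hK z; exact ⟨hP0 _ K z, le_refl _⟩
      | succ t ih =>
        intro K hK z
        rw [Function.iterate_succ_apply']
        constructor
        · exact mul_nonneg hβ0.le (integral_nonneg fun z' =>
            Real.iSup_nonneg fun x => (ih (Γ ((x : X), z')) (hΓcpt _) z').1)
        · have hpt : ∀ z' : Z, (⨆ x : K, Lop^[t] p0 (Γ ((x : X), z')) z')
              ≤ ⨆ x : K, pKz Q (Γ ((x : X), z')) z' (lfam t) := by
            intro z'
            rcases K.eq_empty_or_nonempty with rfl | hne
            · haveI : IsEmpty ↥(∅ : Set X) := Set.isEmpty_coe_sort.mpr rfl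
              rw [Real.iSup_of_isEmpty, Real.iSup_of_isEmpty]
            · haveI : Nonempty ↥K := hne.to_subtype
              refine ciSup_le fun x => ?_
              refine le_trans (ih (Γ ((x : X), z')) (hΓcpt _) z').2 ?_
              refine le_ciSup_of_le ?_ x (le_refl _)
              refine ⟨pKz Q (⋃ w ∈ K, Γ ((w : X), z')) z' (lfam t), ?_⟩
              rintro r ⟨x', rfl⟩
              exact hpmono t _ _
                (Set.subset_biUnion_of_mem (u := fun w : X => Γ ((w : X), z')) x'.2)
                (hUnion z' K hK) z'
          have hmain : ∀ z' : Z, β * (⨆ x : K, Lop^[t] p0 (Γ ((x : X), z')) z')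
              ≤ ⨆ x : K, |lfam (t+1) (x : X) z'| :=
            fun z' => le_trans (mul_le_mul_of_nonneg_left (hpt z') hβ0.le) (hsupK t K hK z')
          calc Lop (Lop^[t] p0) K z
              = ∫ z', β * (⨆ x : K, Lop^[t] p0 (Γ ((x : X), z')) z') ∂(Q z) := by
                simp only [hLop]
                rw [integral_const_mul]
          _ ≤ ∫ z', (⨆ x : K, |lfam (t+1) (x : X) z'|) ∂(Q z) :=
                integral_mono_of_nonneg
                  (Eventually.of_forall fun z' => mul_nonneg hβ0.le
                    (Real.iSup_nonneg fun x => (ih (Γ ((x : X), z')) (hΓcpt _) z').1))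
                  ((hl_mem (t+1)).2 K hK z) (Eventually.of_forall hmain)
          _ = pKz Q K z (lfam (t+1)) := rfl
    exact Summable.of_nonneg_of_le (fun t => (hclaim t K hK z).1)
      (fun t => (hclaim t K hK z).2) (hl_sum K hK z)
  · -- (2) integrability part of MemL1C
    intro K hK z
    have hFabs : ∀ z' : Z, (⨆ x : K, |∑' t, pKz Q (Γ ((x : X), z')) z' (lfam t)|)
        = ⨆ x : K, ∑' t, pKz Q (Γ ((x : X), z')) z' (lfam t) :=
      fun z' => iSup_congr fun x => abs_of_nonneg (tsum_nonneg fun t => hP0 _ _ _)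
    have hmeasF : Measurable fun z' : Z => ⨆ x : K, |∑' t, pKz Q (Γ ((x : X), z')) z' (lfam t)| :=
      measurable_ciSup_compact
        (f := fun (x : X) (z' : Z) => |∑' t, pKz Q (Γ (x, z')) z' (lfam t)|) hK
        (fun z' => continuous_abs.comp (hFcont z')) (fun x => (hFmeas x).abs)
    refine Integrable.mono' (((hsumb K hK z).1).const_mul β⁻¹) hmeasF.aestronglyMeasurable ?_
    filter_upwards [(hsumb K hK z).2.2] with z' hsz
    rw [Real.norm_eq_abs, abs_of_nonneg (Real.iSup_nonneg fun x => abs_nonneg _), hFabs]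
    exact hsupF K hK z' hsz
  · -- (3) the inequality
    intro K hK z
    rw [Summable.tsum_eq_zero_add (hl_sum K hK z)]
    refine add_le_add (le_refl _) ?_
    have h1 : (∫ z', (⨆ x : K, ∑' t, pKz Q (Γ ((x : X), z')) z' (lfam t)) ∂(Q z))
        ≤ ∫ z', β⁻¹ * ∑' t, ⨆ x : K, |lfam (t+1) (x : X) z'| ∂(Q z) := by
      refine integral_mono_of_nonneg ?_ (((hsumb K hK z).1).const_mul β⁻¹) ?_
      · exact Eventually.of_forall fun z' =>
          Real.iSup_nonneg fun x => tsum_nonneg fun t => hP0 _ _ _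
      · filter_upwards [(hsumb K hK z).2.2] with z' hsz
        exact hsupF K hK z' hsz
    calc β * ∫ z', (⨆ x : K, ∑' t, pKz Q (Γ ((x : X), z')) z' (lfam t)) ∂(Q z)
        ≤ β * ∫ z', β⁻¹ * ∑' t, ⨆ x : K, |lfam (t+1) (x : X) z'| ∂(Q z) :=
          mul_le_mul_of_nonneg_left h1 hβ0.le
    _ = ∫ z', ∑' t, ⨆ x : K, |lfam (t+1) (x : X) z'| ∂(Q z) := by
          rw [integral_const_mul, ← mul_assoc, mul_inv_cancel₀ hβ0.ne', one_mul]
    _ = ∑' t, pKz Q K z (lfam (t+1)) := (hsumb K hK z).2.1
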